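/- Let F be a field and L, N, L_Z positive integers. Consider five nodes A2, A3, A4, B3, B4, each node v equipped with matrices F_v ∈ F^{N×L} and H_v ∈ F^{N×L_Z} where each H_v has full row rank N. Suppose the correctness condition holds for the pairs {A3,B3}, {A4,B3}, {A4,B4}, and the security condition holds for the pairs {A3,B4}, {A2,B4}, {A2,B3}. Writing α_{vu} = dim(rowspan(H_v) ∩ rowspan(H_u)), one has α_{A2 A3} ≤ 3N − (α_{B3 A4} + α_{A4 B4}) − L. -/

import Mathlib

set_option maxHeartbeats 1000000
set_option synthInstance.maxHeartbeats 400000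


open Matrix

/-- The row space of a matrix: the span of its rows in `Fin LZ → F`. -/
noncomputable def rowSpan {F : Type} [Field F] {N LZ : ℕ}
    (H : Matrix (Fin N) (Fin LZ) F) : Submodule F (Fin LZ → F) :=
  Submodule.span F (Set.range H)

/-- Linear correctness condition for a (qualified) pair of nodes. -/
def CorrectPair (F : Type) [Field F] (L N LZ : ℕ)
    (Fv Fu : Matrix (Fin N) (Fin L) F) (Hv Hu : Matrix (Fin N) (Fin LZ) F) : Prop :=
  ∀ (k : ℕ) (Pv Pu : Matrix (Fin k) (Fin N) F),
    Pv * Hv = Pu * Hu →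
    Pv.rank = Module.finrank F ↥(rowSpan Hv ⊓ rowSpan Hu) →
    Pu.rank = Module.finrank F ↥(rowSpan Hv ⊓ rowSpan Hu) →
    (Pv * Fv - Pu * Fu).rank = L

/-- Linear security condition for an (unqualified) pair of nodes. -/
def SecurePair (F : Type) [Field F] (L N LZ : ℕ)
    (Fv Fu : Matrix (Fin N) (Fin L) F) (Hv Hu : Matrix (Fin N) (Fin LZ) F) : Prop :=
  ∀ (k : ℕ) (Pv Pu : Matrix (Fin k) (Fin N) F),
    Pv * Hv = Pu * Hu → Pv * Fv = Pu * Fu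

namespace CDSFig3

variable {F : Type} [Field F] {L N LZ : ℕ}

lemma rowSpan_eq_range (H : Matrix (Fin N) (Fin LZ) F) :
    rowSpan H = LinearMap.range H.vecMulLinear := by
  rw [range_vecMulLinear]; rfl

lemma finrank_rowSpan {H : Matrix (Fin N) (Fin LZ) F} (hH : H.rank = N) :
    Module.finrank F ↥(rowSpan H) = N := by
  have := H.rank_eq_finrank_span_row
  rw [hH] at this
  exact this.symm

lemma vecMulLinear_injective {H : Matrix (Fin N) (Fin LZ) F} (hH : H.rank = N) :
    Function.Injective H.vecMulLinear := by
  rw [Matrix.coe_vecMulLinear]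
  rw [Matrix.vecMul_injective_iff]
  rw [linearIndependent_iff_card_eq_finrank_span]
  have := H.rank_eq_finrank_span_row
  rw [hH] at this
  simpa [Set.finrank] using this

/-- The decoding map of a node: on the row space of `H`, send `p ᵥ* H` to `p ᵥ* Fv`. -/
noncomputable def phi (Fv : Matrix (Fin N) (Fin L) F) (H : Matrix (Fin N) (Fin LZ) F)
    (hinj : Function.Injective H.vecMulLinear) : ↥(rowSpan H) →ₗ[F] (Fin L → F) :=
  Fv.vecMulLinear ∘ₗ (LinearEquiv.ofInjective H.vecMulLinear hinj).symm.toLinearMap ∘ₗ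
    (LinearEquiv.ofEq _ _ (rowSpan_eq_range H)).toLinearMap

lemma phi_eq (Fv : Matrix (Fin N) (Fin L) F) (H : Matrix (Fin N) (Fin LZ) F)
    (hinj : Function.Injective H.vecMulLinear) (p : Fin N → F)
    (w : ↥(rowSpan H)) (hw : H.vecMulLinear p = (w : Fin LZ → F)) :
    phi Fv H hinj w = Fv.vecMulLinear p := by
  have h1 : (LinearEquiv.ofEq _ _ (rowSpan_eq_range H)) w
      = LinearEquiv.ofInjective H.vecMulLinear hinj p := by
    apply Subtype.ext
    simp [LinearEquiv.ofInjective_apply, hw]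
  simp only [phi, LinearMap.comp_apply, LinearEquiv.coe_toLinearMap, h1,
    LinearEquiv.symm_apply_apply]

/-- Entries of a product matrix, row by row. -/
lemma mul_row_entry {k m : ℕ} (P : Matrix (Fin k) (Fin N) F) (M : Matrix (Fin N) (Fin m) F)
    (i : Fin k) (j : Fin m) : (P * M) i j = M.vecMulLinear (P i) j := by
  simp [Matrix.mul_apply, Matrix.vecMulLinear_apply, Matrix.vecMul, dotProduct]

/-- On the intersection of row spaces, the decoding maps of a secure pair agree. -/
lemma secure_agree {Fv Fu : Matrix (Fin N) (Fin L) F} {Hv Hu : Matrix (Fin N) (Fin LZ) F}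
    (hsec : SecurePair F L N LZ Fv Fu Hv Hu)
    (hv : Function.Injective Hv.vecMulLinear) (hu : Function.Injective Hu.vecMulLinear)
    (w : Fin LZ → F) (hwv : w ∈ rowSpan Hv) (hwu : w ∈ rowSpan Hu) :
    phi Fv Hv hv ⟨w, hwv⟩ = phi Fu Hu hu ⟨w, hwu⟩ := by
  have hv' : w ∈ LinearMap.range Hv.vecMulLinear := by rwa [← rowSpan_eq_range]
  have hu' : w ∈ LinearMap.range Hu.vecMulLinear := by rwa [← rowSpan_eq_range]
  obtain ⟨p, hp⟩ := hv'
  obtain ⟨q, hq⟩ := hu'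
  have hPH : (Matrix.of fun _ : Fin 1 => p) * Hv = (Matrix.of fun _ : Fin 1 => q) * Hu := by
    ext i j
    rw [mul_row_entry, mul_row_entry]
    have : Hv.vecMulLinear p j = Hu.vecMulLinear q j := by rw [hp, hq]
    exact this
  have hPF := hsec 1 _ _ hPH
  rw [phi_eq Fv Hv hv p _ hp, phi_eq Fu Hu hu q _ hq]
  ext j
  have e1 : ((Matrix.of fun _ : Fin 1 => p) * Fv) 0 j = Fv.vecMulLinear p j :=
    mul_row_entry _ _ _ _
  have e2 : ((Matrix.of fun _ : Fin 1 => q) * Fu) 0 j = Fu.vecMulLinear q j :=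
    mul_row_entry _ _ _ _
  rw [← e1, ← e2, hPF]

end CDSFig3

open CDSFig3 in
/-- **Intermediate bound (equation (48)) in the converse proof of Theorem 3.**
With qualified edges `{A3,B3}, {A4,B3}, {A4,B4}` and unqualified edges
`{A3,B4}, {A2,B4}, {A2,B3}`, the noise overlap of `A2` and `A3` satisfies
`α_{A2A3} ≤ 3N − (α_{B3A4} + α_{A4B4}) − L`. -/
theorem cds_fig3_intermediate_bound (F : Type) [Field F]
    (L N LZ : ℕ) (hL : 0 < L) (hN : 0 < N) (hLZ : 0 < LZ)
    (FA2 FA3 FA4 FB3 FB4 : Matrix (Fin N) (Fin L) F)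
    (HA2 HA3 HA4 HB3 HB4 : Matrix (Fin N) (Fin LZ) F)
    (hHA2 : HA2.rank = N) (hHA3 : HA3.rank = N) (hHA4 : HA4.rank = N)
    (hHB3 : HB3.rank = N) (hHB4 : HB4.rank = N)
    (hq1 : CorrectPair F L N LZ FA3 FB3 HA3 HB3)
    (hq2 : CorrectPair F L N LZ FA4 FB3 HA4 HB3)
    (hq3 : CorrectPair F L N LZ FA4 FB4 HA4 HB4)
    (hs1 : SecurePair F L N LZ FA3 FB4 HA3 HB4)
    (hs2 : SecurePair F L N LZ FA2 FB4 HA2 HB4)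
    (hs3 : SecurePair F L N LZ FA2 FB3 HA2 HB3) :
    Module.finrank F ↥(rowSpan HA2 ⊓ rowSpan HA3)
        + (Module.finrank F ↥(rowSpan HB3 ⊓ rowSpan HA4)
            + Module.finrank F ↥(rowSpan HA4 ⊓ rowSpan HB4))
        + L
      ≤ 3 * N := by
  classical
  have h2 : Function.Injective HA2.vecMulLinear := vecMulLinear_injective hHA2
  have h3 : Function.Injective HA3.vecMulLinear := vecMulLinear_injective hHA3
  have hb3 : Function.Injective HB3.vecMulLinear := vecMulLinear_injective hHB3
  have hb4 : Function.Injective HB4.vecMulLinear := vecMulLinear_injective hHB4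
  set W2 := rowSpan HA2 with hW2
  set W3 := rowSpan HA3 with hW3
  set W4 := rowSpan HA4 with hW4
  set Wb3 := rowSpan HB3 with hWb3
  set Wb4 := rowSpan HB4 with hWb4
  set K : Submodule F (Fin LZ → F) := W3 ⊓ Wb3 with hK
  set M : Submodule F (Fin LZ → F) := Wb3 ⊓ Wb4 with hM
  set R : Submodule F (Fin LZ → F) := W4 ⊓ M with hR
  set I23 : Submodule F (Fin LZ → F) := W2 ⊓ W3 with hI23
  set Q : Submodule F (Fin LZ → F) := I23 ⊓ M with hQ
  have hfW3 : Module.finrank F ↥W3 = N := finrank_rowSpan hHA3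
  have hfWb3 : Module.finrank F ↥Wb3 = N := finrank_rowSpan hHB3
  have hfW4 : Module.finrank F ↥W4 = N := finrank_rowSpan hHA4
  -- ★ : finrank K ≥ L + finrank Q
  have hstar : L + Module.finrank F ↥Q ≤ Module.finrank F ↥K := by
    set α := Module.finrank F ↥K with hα
    set bK : Module.Basis (Fin α) F ↥K := Module.finBasis F ↥K with hbK
    have memW3 : ∀ i : Fin α, ((bK i : ↥K) : Fin LZ → F) ∈ LinearMap.range HA3.vecMulLinear := by
      intro i
      rw [← rowSpan_eq_range]
      exact (inf_le_left : K ≤ W3) (bK i).2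
    have memWb3 : ∀ i : Fin α, ((bK i : ↥K) : Fin LZ → F) ∈ LinearMap.range HB3.vecMulLinear := by
      intro i
      rw [← rowSpan_eq_range]
      exact (inf_le_right : K ≤ Wb3) (bK i).2
    set Pv : Matrix (Fin α) (Fin N) F := Matrix.of fun i => (memW3 i).choose with hPv
    set Pu : Matrix (Fin α) (Fin N) F := Matrix.of fun i => (memWb3 i).choose with hPu
    set B : Matrix (Fin α) (Fin LZ) F :=
      Matrix.of (fun i => ((bK i : ↥K) : Fin LZ → F)) with hB
    have hPvH : Pv * HA3 = B := by
      ext i j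
      rw [mul_row_entry]
      exact congrFun (memW3 i).choose_spec j
    have hPuH : Pu * HB3 = B := by
      ext i j
      rw [mul_row_entry]
      exact congrFun (memWb3 i).choose_spec j
    have hBspan : Submodule.span F (Set.range B) = K := by
      have hr : Set.range B = K.subtype '' (Set.range bK) := by
        rw [← Set.range_comp]
        rfl
      rw [hr, ← Submodule.map_span, bK.span_eq, Submodule.map_top, Submodule.range_subtype]
    have hBrank : B.rank = α := by
      rw [B.rank_eq_finrank_span_row]
      change Module.finrank F ↥(Submodule.span F (Set.range B)) = α
      rw [hBspan]
    have hrv : Pv.rank = α := by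
      refine le_antisymm ?_ ?_
      · simpa using Pv.rank_le_card_height
      · calc α = B.rank := hBrank.symm
          _ ≤ Pv.rank := by rw [← hPvH]; exact Matrix.rank_mul_le_left Pv HA3
    have hru : Pu.rank = α := by
      refine le_antisymm ?_ ?_
      · simpa using Pu.rank_le_card_height
      · calc α = B.rank := hBrank.symm
          _ ≤ Pu.rank := by rw [← hPuH]; exact Matrix.rank_mul_le_left Pu HB3
    have hD : (Pv * FA3 - Pu * FB3).rank = L :=
      hq1 α Pv Pu (by rw [hPvH, hPuH]) (by rw [hrv, hα, hK]) (by rw [hru, hα, hK])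
    set D : Matrix (Fin α) (Fin L) F := Pv * FA3 - Pu * FB3 with hDdef
    set ψ : ↥K →ₗ[F] (Fin L → F) :=
      (phi FA3 HA3 h3 ∘ₗ Submodule.inclusion (inf_le_left : K ≤ W3))
        - (phi FB3 HB3 hb3 ∘ₗ Submodule.inclusion (inf_le_right : K ≤ Wb3)) with hψ
    have hψb : ∀ i : Fin α, ψ (bK i) = D i := by
      intro i
      have e1 : phi FA3 HA3 h3 (Submodule.inclusion (inf_le_left : K ≤ W3) (bK i))
          = FA3.vecMulLinear ((memW3 i).choose) :=
        phi_eq FA3 HA3 h3 _ _ ((memW3 i).choose_spec)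
      have e2 : phi FB3 HB3 hb3 (Submodule.inclusion (inf_le_right : K ≤ Wb3) (bK i))
          = FB3.vecMulLinear ((memWb3 i).choose) :=
        phi_eq FB3 HB3 hb3 _ _ ((memWb3 i).choose_spec)
      rw [hψ]
      simp only [LinearMap.sub_apply, LinearMap.comp_apply, e1, e2]
      ext j
      rw [hDdef]
      simp only [Pi.sub_apply, Matrix.sub_apply, mul_row_entry]
      rfl
    have hrange : L ≤ Module.finrank F ↥(LinearMap.range ψ) := by
      have hsub : Submodule.span F (Set.range D) ≤ LinearMap.range ψ := by
        rw [Submodule.span_le]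
        rintro _ ⟨i, rfl⟩
        exact ⟨bK i, hψb i⟩
      have hDr : Module.finrank F ↥(Submodule.span F (Set.range D)) = L := by
        exact D.rank_eq_finrank_span_row.symm.trans hD
      have hm := Submodule.finrank_mono hsub
      rw [hDr] at hm
      exact hm
    have hQK : Q ≤ K := by
      rw [hQ, hK, hI23, hM]
      exact le_inf (inf_le_left.trans inf_le_right) (inf_le_right.trans inf_le_left)
    have hker : Module.finrank F ↥Q ≤ Module.finrank F ↥(LinearMap.ker ψ) := by
      set Qk : Submodule F ↥K := Q.comap K.subtype with hQk
      have hQkker : Qk ≤ LinearMap.ker ψ := by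
        intro x hx
        have hxQ : (x : Fin LZ → F) ∈ Q := hx
        have hw2 : (x : Fin LZ → F) ∈ W2 := (hxQ.1 : (x : Fin LZ → F) ∈ I23).1
        have hw3 : (x : Fin LZ → F) ∈ W3 := (hxQ.1 : (x : Fin LZ → F) ∈ I23).2
        have hwb3 : (x : Fin LZ → F) ∈ Wb3 := (hxQ.2 : (x : Fin LZ → F) ∈ M).1
        have hwb4 : (x : Fin LZ → F) ∈ Wb4 := (hxQ.2 : (x : Fin LZ → F) ∈ M).2
        have e1 : phi FA3 HA3 h3 ⟨(x : Fin LZ → F), hw3⟩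
            = phi FB4 HB4 hb4 ⟨(x : Fin LZ → F), hwb4⟩ :=
          secure_agree hs1 h3 hb4 _ hw3 hwb4
        have e2 : phi FA2 HA2 h2 ⟨(x : Fin LZ → F), hw2⟩
            = phi FB4 HB4 hb4 ⟨(x : Fin LZ → F), hwb4⟩ :=
          secure_agree hs2 h2 hb4 _ hw2 hwb4
        have e3 : phi FA2 HA2 h2 ⟨(x : Fin LZ → F), hw2⟩
            = phi FB3 HB3 hb3 ⟨(x : Fin LZ → F), hwb3⟩ :=
          secure_agree hs3 h2 hb3 _ hw2 hwb3
        have key : phi FA3 HA3 h3 ⟨(x : Fin LZ → F), hw3⟩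
            = phi FB3 HB3 hb3 ⟨(x : Fin LZ → F), hwb3⟩ := by
          rw [e1, ← e2, e3]
        have hinc3 : Submodule.inclusion (inf_le_left : K ≤ W3) x
            = ⟨(x : Fin LZ → F), hw3⟩ := rfl
        have hincb3 : Submodule.inclusion (inf_le_right : K ≤ Wb3) x
            = ⟨(x : Fin LZ → F), hwb3⟩ := rfl
        rw [LinearMap.mem_ker, hψ]
        simp only [LinearMap.sub_apply, LinearMap.comp_apply, hinc3, hincb3, key, sub_self]
      have hQkrank : Module.finrank F ↥Qk = Module.finrank F ↥Q := by
        have hmap : Qk.map K.subtype = Q := by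
          rw [hQk, Submodule.map_comap_subtype, inf_eq_right.mpr hQK]
        have hfr := Submodule.finrank_map_subtype_eq K Qk
        rw [hmap] at hfr
        exact hfr.symm
      rw [← hQkrank]
      exact Submodule.finrank_mono hQkker
    have hrn := LinearMap.finrank_range_add_finrank_ker ψ
    omega
  -- Pure dimension counting from here on.
  have mod1 := Submodule.finrank_sup_add_finrank_inf_eq I23 M
  have mono1 : Module.finrank F ↥(I23 ⊔ M) ≤ Module.finrank F ↥(W3 ⊔ M) :=
    Submodule.finrank_mono (sup_le_sup_right (by rw [hI23]; exact inf_le_right) M)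
  have mod2 := Submodule.finrank_sup_add_finrank_inf_eq W3 M
  have mod3 := Submodule.finrank_sup_add_finrank_inf_eq K R
  have mono3 : Module.finrank F ↥(K ⊔ R) ≤ Module.finrank F ↥Wb3 :=
    Submodule.finrank_mono (sup_le (by rw [hK]; exact inf_le_right)
      (by rw [hR, hM]; exact inf_le_right.trans inf_le_left))
  have mono4 : Module.finrank F ↥(K ⊓ R) ≤ Module.finrank F ↥(W3 ⊓ M) :=
    Submodule.finrank_mono (le_inf (inf_le_left.trans (by rw [hK]; exact inf_le_left))
      (inf_le_right.trans (by rw [hR]; exact inf_le_right)))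
  have mod5 := Submodule.finrank_sup_add_finrank_inf_eq (W4 ⊓ Wb3) (W4 ⊓ Wb4)
  have mono5 : Module.finrank F ↥((W4 ⊓ Wb3) ⊔ (W4 ⊓ Wb4)) ≤ Module.finrank F ↥W4 :=
    Submodule.finrank_mono (sup_le inf_le_left inf_le_left)
  have hinf5 : (W4 ⊓ Wb3) ⊓ (W4 ⊓ Wb4) = R := by
    rw [hR, hM]
    refine le_antisymm ?_ ?_
    · exact le_inf (inf_le_left.trans inf_le_left)
        (le_inf (inf_le_left.trans inf_le_right) (inf_le_right.trans inf_le_right))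
    · exact le_inf (le_inf inf_le_left (inf_le_right.trans inf_le_left))
        (le_inf inf_le_left (inf_le_right.trans inf_le_right))
  rw [hinf5] at mod5
  have hcomm : Wb3 ⊓ W4 = W4 ⊓ Wb3 := inf_comm _ _
  rw [hcomm]
  have hQeq : I23 ⊓ M = Q := hQ.symm
  rw [hQeq] at mod1
  omega
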